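/- Let Ω ⊆ ℂ × ℂ be open and let g : Ω → ℂ be holomorphic in both variables (z, t) and nowhere zero, satisfying the evolution equation ∂g/∂t = (i/2)·( ∂³g/∂z³ − 3·(∂g/∂z)·(∂²g/∂z²)/g + (3/2)·(∂g/∂z)³/g² ) on Ω. Then the function x := (∂g/∂z)/g satisfies the mKdV-type equation ∂x/∂t = (i/2)·( ∂³x/∂z³ − (3/2)·x²·(∂x/∂z) ) on Ω. -/

import Mathlib

open Complex

/-- Partial derivative in the first (space, `z`) variable of a function on `ℂ × ℂ`. -/
noncomputable def dz (f : ℂ × ℂ → ℂ) (p : ℂ × ℂ) : ℂ := fderiv ℂ f p (1, 0)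

/-- Partial derivative in the second (time, `t`) variable of a function on `ℂ × ℂ`. -/
noncomputable def dt (f : ℂ × ℂ → ℂ) (p : ℂ × ℂ) : ℂ := fderiv ℂ f p (0, 1)

section helpers

variable {f h : ℂ × ℂ → ℂ} {p : ℂ × ℂ} (v : ℂ × ℂ)

lemma fda_add (hf : DifferentiableAt ℂ f p) (hh : DifferentiableAt ℂ h p) :
    fderiv ℂ (fun q => f q + h q) p v = fderiv ℂ f p v + fderiv ℂ h p v := by
  rw [fderiv_fun_add hf hh]; simp

lemma fda_sub (hf : DifferentiableAt ℂ f p) (hh : DifferentiableAt ℂ h p) :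
    fderiv ℂ (fun q => f q - h q) p v = fderiv ℂ f p v - fderiv ℂ h p v := by
  rw [fderiv_fun_sub hf hh]; simp

lemma fda_mul (hf : DifferentiableAt ℂ f p) (hh : DifferentiableAt ℂ h p) :
    fderiv ℂ (fun q => f q * h q) p v
      = fderiv ℂ f p v * h p + f p * fderiv ℂ h p v := by
  rw [fderiv_fun_mul hf hh]
  simp [smul_eq_mul]
  ring

lemma fda_const_mul (hf : DifferentiableAt ℂ f p) (c : ℂ) :
    fderiv ℂ (fun q => c * f q) p v = c * fderiv ℂ f p v := by
  rw [fderiv_const_mul hf]; simp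

lemma fda_inv (hf : DifferentiableAt ℂ f p) (h0 : f p ≠ 0) :
    fderiv ℂ (fun q => (f q)⁻¹) p v = -(fderiv ℂ f p v) / (f p) ^ 2 := by
  have e : (fun q => (f q)⁻¹) = Inv.inv ∘ f := rfl
  rw [e, fderiv_comp p (differentiableAt_inv h0) hf, fderiv_inv' h0]
  simp only [ContinuousLinearMap.comp_apply, ContinuousLinearMap.neg_apply,
    ContinuousLinearMap.mulLeftRight_apply]
  rw [neg_div, neg_inj, eq_div_iff (pow_ne_zero 2 h0)]
  have : (f p)⁻¹ * (fderiv ℂ f p v) * (f p)⁻¹ * (f p) ^ 2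
      = (fderiv ℂ f p v) * (((f p)⁻¹ * f p) * ((f p)⁻¹ * f p)) := by ring
  rw [this, inv_mul_cancel₀ h0]
  ring

lemma fda_div (hf : DifferentiableAt ℂ f p) (hh : DifferentiableAt ℂ h p) (h0 : h p ≠ 0) :
    fderiv ℂ (fun q => f q / h q) p v
      = (fderiv ℂ f p v * h p - f p * fderiv ℂ h p v) / (h p) ^ 2 := by
  simp only [div_eq_mul_inv]
  rw [fda_mul v hf (hh.fun_inv h0), fda_inv v hh h0]
  field_simp
  ring

lemma ana_fda {Ω : Set (ℂ × ℂ)} (hf : AnalyticOnNhd ℂ f Ω) :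
    AnalyticOnNhd ℂ (fun p => fderiv ℂ f p v) Ω :=
  (ContinuousLinearMap.apply ℂ ℂ v).comp_analyticOnNhd hf.fderiv

lemma ana_dz {Ω : Set (ℂ × ℂ)} (hf : AnalyticOnNhd ℂ f Ω) :
    AnalyticOnNhd ℂ (dz f) Ω := ana_fda ((1 : ℂ), (0 : ℂ)) hf

lemma dt_dz_comm {Ω : Set (ℂ × ℂ)} {g : ℂ × ℂ → ℂ}
    (hg : AnalyticOnNhd ℂ g Ω) (hp : p ∈ Ω) :
    dt (dz g) p = dz (dt g) p := by
  have hd : DifferentiableAt ℂ (fderiv ℂ g) p := ((hg.fderiv) p hp).differentiableAt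
  have key : ∀ v w : ℂ × ℂ,
      fderiv ℂ (fun q => fderiv ℂ g q v) p w = fderiv ℂ (fderiv ℂ g) p w v := by
    intro v w
    have e : (fun q => fderiv ℂ g q v)
        = ⇑(ContinuousLinearMap.apply ℂ ℂ v) ∘ (fderiv ℂ g) := rfl
    rw [e, fderiv_comp p (ContinuousLinearMap.apply ℂ ℂ v).differentiableAt hd]
    simp
  have hsymm : IsSymmSndFDerivAt ℂ g p :=
    ((hg p hp).contDiffAt (n := 2)).isSymmSndFDerivAt (by simp)
  show fderiv ℂ (fun q => fderiv ℂ g q (1, 0)) p (0, 1)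
      = fderiv ℂ (fun q => fderiv ℂ g q (0, 1)) p (1, 0)
  rw [key, key]
  exact (hsymm ((1:ℂ), (0:ℂ)) ((0:ℂ), (1:ℂ))).symm

end helpers

lemma shiffman_alg (a b c d e J : ℂ) (ha : a ≠ 0) :
    (J * ((e * a ^ 3 - 3 * b * d * a ^ 2 - 3 * c ^ 2 * a ^ 2
        + 15 / 2 * b ^ 2 * c * a - 3 * b ^ 4) / a ^ 3) * a
      - b * (J * ((d * (a * a) - 3 * (b * (c * a)) + 3 / 2 * (b * (b * b))) / (a * a)))) / a ^ 2
    = J * ((e * a ^ 3 - 4 * b * d * a ^ 2 - 3 * c ^ 2 * a ^ 2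
          + 12 * b ^ 2 * c * a - 6 * b ^ 4) / a ^ 4
        - 3 / 2 * (b / a) ^ 2 * ((c * a - b * b) / (a * a))) := by
  field_simp [ha]
  ring

set_option maxHeartbeats 2000000 in
/-- If a nowhere-zero holomorphic `g(z,t)` satisfies the Shiffman evolution equation
`∂g/∂t = (i/2)(g''' − 3 g' g''/g + (3/2)(g')³/g²)`, then `x = g'/g` satisfies the
mKdV-type equation `∂x/∂t = (i/2)(x''' − (3/2) x² x')`. -/
theorem shiffman_flow_gives_mkdv_flow_of_log_derivative
    (Ω : Set (ℂ × ℂ)) (hΩ : IsOpen Ω) (g : ℂ × ℂ → ℂ)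
    (hg : AnalyticOnNhd ℂ g Ω) (hg0 : ∀ p ∈ Ω, g p ≠ 0)
    (hev : ∀ p ∈ Ω,
      dt g p = (Complex.I / 2) * (dz (dz (dz g)) p
        - 3 * dz g p * dz (dz g) p / g p + (3 / 2) * (dz g p) ^ 3 / (g p) ^ 2)) :
    ∀ p ∈ Ω,
      dt (fun q => dz g q / g q) p
        = (Complex.I / 2) * (dz (dz (dz (fun q => dz g q / g q))) p
            - (3 / 2) * (dz g p / g p) ^ 2 * dz (fun q => dz g q / g q) p) := by
  have fderiv_apply_z : ∀ (f : ℂ × ℂ → ℂ) (p : ℂ × ℂ),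
      fderiv ℂ f p ((1 : ℂ), (0 : ℂ)) = dz f p := fun _ _ => rfl
  intro p hp
  have hA1 : AnalyticOnNhd ℂ (dz g) Ω := ana_dz hg
  have hA2 : AnalyticOnNhd ℂ (dz (dz g)) Ω := ana_dz hA1
  have hA3 : AnalyticOnNhd ℂ (dz (dz (dz g))) Ω := ana_dz hA2
  have d0 : ∀ q ∈ Ω, DifferentiableAt ℂ g q := fun q hq => (hg q hq).differentiableAt
  have d1 : ∀ q ∈ Ω, DifferentiableAt ℂ (dz g) q := fun q hq => (hA1 q hq).differentiableAt
  have d2 : ∀ q ∈ Ω, DifferentiableAt ℂ (dz (dz g)) q := fun q hq => (hA2 q hq).differentiableAt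
  have d3 : ∀ q ∈ Ω, DifferentiableAt ℂ (dz (dz (dz g))) q :=
    fun q hq => (hA3 q hq).differentiableAt
  -- first derivative of x = g'/g, in any direction
  have hx : ∀ v : ℂ × ℂ, ∀ q ∈ Ω, fderiv ℂ (fun q => dz g q / g q) q v
      = (fderiv ℂ (dz g) q v * g q - dz g q * fderiv ℂ g q v) / (g q) ^ 2 :=
    fun v q hq => fda_div v (d1 q hq) (d0 q hq) (hg0 q hq)
  have hxz : ∀ q ∈ Ω, dz (fun q => dz g q / g q) q
      = (dz (dz g) q * g q - dz g q * dz g q) / (g q * g q) := by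
    intro q hq
    rw [← pow_two (g q)]
    exact hx ((1 : ℂ), (0 : ℂ)) q hq
  -- second z-derivative of x on Ω
  have hx2 : ∀ q ∈ Ω, dz (dz (fun q => dz g q / g q)) q
      = (dz (dz (dz g)) q * (g q * g q) - 3 * (dz g q * (dz (dz g) q * g q))
          + 2 * (dz g q * (dz g q * dz g q))) / (g q * (g q * g q)) := by
    intro q hq
    have hev1 : dz (fun q => dz g q / g q)
        =ᶠ[nhds q] fun r => (dz (dz g) r * g r - dz g r * dz g r) / (g r * g r) :=
      Filter.eventuallyEq_of_mem (hΩ.mem_nhds hq) (fun r hr => hxz r hr)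
    have h1 : dz (dz (fun q => dz g q / g q)) q
        = fderiv ℂ (fun r => (dz (dz g) r * g r - dz g r * dz g r) / (g r * g r)) q
            ((1 : ℂ), (0 : ℂ)) := by
      show fderiv ℂ (dz (fun q => dz g q / g q)) q ((1 : ℂ), (0 : ℂ)) = _
      rw [hev1.fderiv_eq]
    rw [h1, fda_div _ (((d2 q hq).fun_mul (d0 q hq)).fun_sub ((d1 q hq).fun_mul (d1 q hq)))
        ((d0 q hq).fun_mul (d0 q hq)) (mul_ne_zero (hg0 q hq) (hg0 q hq)),
      fda_sub _ ((d2 q hq).fun_mul (d0 q hq)) ((d1 q hq).fun_mul (d1 q hq)),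
      fda_mul _ (d2 q hq) (d0 q hq), fda_mul _ (d1 q hq) (d1 q hq),
      fda_mul _ (d0 q hq) (d0 q hq)]
    simp only [fderiv_apply_z]
    field_simp [hg0 q hq]
    ring
  -- third z-derivative of x at p
  have hx3 : dz (dz (dz (fun q => dz g q / g q))) p
      = (dz (dz (dz (dz g))) p * (g p) ^ 3
          - 4 * dz g p * dz (dz (dz g)) p * (g p) ^ 2
          - 3 * (dz (dz g) p) ^ 2 * (g p) ^ 2
          + 12 * (dz g p) ^ 2 * dz (dz g) p * g p
          - 6 * (dz g p) ^ 4) / (g p) ^ 4 := by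
    have hev2 : dz (dz (fun q => dz g q / g q))
        =ᶠ[nhds p] fun r => (dz (dz (dz g)) r * (g r * g r)
            - 3 * (dz g r * (dz (dz g) r * g r))
            + 2 * (dz g r * (dz g r * dz g r))) / (g r * (g r * g r)) :=
      Filter.eventuallyEq_of_mem (hΩ.mem_nhds hp) (fun r hr => hx2 r hr)
    have h1 : dz (dz (dz (fun q => dz g q / g q))) p
        = fderiv ℂ (fun r => (dz (dz (dz g)) r * (g r * g r)
            - 3 * (dz g r * (dz (dz g) r * g r))
            + 2 * (dz g r * (dz g r * dz g r))) / (g r * (g r * g r))) p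
            ((1 : ℂ), (0 : ℂ)) := by
      show fderiv ℂ (dz (dz (fun q => dz g q / g q))) p ((1 : ℂ), (0 : ℂ)) = _
      rw [hev2.fderiv_eq]
    have hdA : DifferentiableAt ℂ (fun r => dz (dz (dz g)) r * (g r * g r)) p :=
      (d3 p hp).mul ((d0 p hp).mul (d0 p hp))
    have hdB : DifferentiableAt ℂ (fun r => dz g r * (dz (dz g) r * g r)) p :=
      (d1 p hp).mul ((d2 p hp).mul (d0 p hp))
    have hdC : DifferentiableAt ℂ (fun r => dz g r * (dz g r * dz g r)) p :=
      (d1 p hp).mul ((d1 p hp).mul (d1 p hp))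
    have hdD : DifferentiableAt ℂ (fun r => g r * (g r * g r)) p :=
      (d0 p hp).mul ((d0 p hp).mul (d0 p hp))
    rw [h1, fda_div _ ((hdA.fun_sub (hdB.const_mul 3)).fun_add (hdC.const_mul 2)) hdD
        (mul_ne_zero (hg0 p hp) (mul_ne_zero (hg0 p hp) (hg0 p hp))),
      fda_add _ (hdA.fun_sub (hdB.const_mul 3)) (hdC.const_mul 2),
      fda_sub _ hdA (hdB.const_mul 3),
      fda_const_mul _ hdB 3, fda_const_mul _ hdC 2,
      fda_mul _ (d3 p hp) ((d0 p hp).fun_mul (d0 p hp)),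
      fda_mul _ (d1 p hp) ((d2 p hp).fun_mul (d0 p hp)),
      fda_mul _ (d1 p hp) ((d1 p hp).fun_mul (d1 p hp)),
      fda_mul _ (d0 p hp) ((d0 p hp).fun_mul (d0 p hp)),
      fda_mul _ (d2 p hp) (d0 p hp),
      fda_mul _ (d1 p hp) (d1 p hp),
      fda_mul _ (d0 p hp) (d0 p hp)]
    simp only [fderiv_apply_z]
    field_simp [hg0 p hp]
    ring
  -- rewrite the evolution equation with a common denominator
  have hE : ∀ q ∈ Ω, dt g q
      = Complex.I / 2 * ((dz (dz (dz g)) q * (g q * g q)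
          - 3 * (dz g q * (dz (dz g) q * g q))
          + 3 / 2 * (dz g q * (dz g q * dz g q))) / (g q * g q)) := by
    intro q hq
    rw [hev q hq]
    field_simp [hg0 q hq]
  -- z-derivative of dt g at p
  have hdz_dtg : dz (dt g) p
      = Complex.I / 2 * ((dz (dz (dz (dz g))) p * (g p) ^ 3
          - 3 * dz g p * dz (dz (dz g)) p * (g p) ^ 2
          - 3 * (dz (dz g) p) ^ 2 * (g p) ^ 2
          + 15 / 2 * (dz g p) ^ 2 * dz (dz g) p * g p
          - 3 * (dz g p) ^ 4) / (g p) ^ 3) := by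
    have hev3 : dt g =ᶠ[nhds p] fun r => Complex.I / 2 * ((dz (dz (dz g)) r * (g r * g r)
          - 3 * (dz g r * (dz (dz g) r * g r))
          + 3 / 2 * (dz g r * (dz g r * dz g r))) / (g r * g r)) :=
      Filter.eventuallyEq_of_mem (hΩ.mem_nhds hp) (fun r hr => hE r hr)
    have h1 : dz (dt g) p
        = fderiv ℂ (fun r => Complex.I / 2 * ((dz (dz (dz g)) r * (g r * g r)
            - 3 * (dz g r * (dz (dz g) r * g r))
            + 3 / 2 * (dz g r * (dz g r * dz g r))) / (g r * g r))) p
            ((1 : ℂ), (0 : ℂ)) := by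
      show fderiv ℂ (dt g) p ((1 : ℂ), (0 : ℂ)) = _
      rw [hev3.fderiv_eq]
    have hdA : DifferentiableAt ℂ (fun r => dz (dz (dz g)) r * (g r * g r)) p :=
      (d3 p hp).mul ((d0 p hp).mul (d0 p hp))
    have hdB : DifferentiableAt ℂ (fun r => dz g r * (dz (dz g) r * g r)) p :=
      (d1 p hp).mul ((d2 p hp).mul (d0 p hp))
    have hdC : DifferentiableAt ℂ (fun r => dz g r * (dz g r * dz g r)) p :=
      (d1 p hp).mul ((d1 p hp).mul (d1 p hp))
    have hdD : DifferentiableAt ℂ (fun r => g r * g r) p := (d0 p hp).mul (d0 p hp)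
    have hgg : (fun r : ℂ × ℂ => g r * g r) p ≠ 0 := mul_ne_zero (hg0 p hp) (hg0 p hp)
    have hdQ : DifferentiableAt ℂ (fun r => (dz (dz (dz g)) r * (g r * g r)
        - 3 * (dz g r * (dz (dz g) r * g r))
        + 3 / 2 * (dz g r * (dz g r * dz g r))) / (g r * g r)) p :=
      by
        simp only [div_eq_mul_inv]
        exact ((hdA.sub (hdB.const_mul 3)).add (hdC.const_mul (3 / 2))).mul (hdD.inv hgg)
    rw [h1, fda_const_mul _ hdQ (Complex.I / 2),
      fda_div _ ((hdA.fun_sub (hdB.const_mul 3)).fun_add (hdC.const_mul (3 / 2))) hdD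
        (mul_ne_zero (hg0 p hp) (hg0 p hp)),
      fda_add _ (hdA.fun_sub (hdB.const_mul 3)) (hdC.const_mul (3 / 2)),
      fda_sub _ hdA (hdB.const_mul 3),
      fda_const_mul _ hdB 3, fda_const_mul _ hdC (3 / 2),
      fda_mul _ (d3 p hp) ((d0 p hp).fun_mul (d0 p hp)),
      fda_mul _ (d1 p hp) ((d2 p hp).fun_mul (d0 p hp)),
      fda_mul _ (d1 p hp) ((d1 p hp).fun_mul (d1 p hp)),
      fda_mul _ (d2 p hp) (d0 p hp),
      fda_mul _ (d1 p hp) (d1 p hp),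
      fda_mul _ (d0 p hp) (d0 p hp)]
    simp only [fderiv_apply_z]
    field_simp [hg0 p hp]
    ring
  -- time derivative of x at p
  have ht : dt (fun q => dz g q / g q) p
      = (dt (dz g) p * g p - dz g p * dt g p) / (g p) ^ 2 :=
    hx ((0 : ℂ), (1 : ℂ)) p hp
  rw [ht, dt_dz_comm hg hp, hdz_dtg, hE p hp, hx3, hxz p hp]
  exact shiffman_alg (g p) (dz g p) (dz (dz g) p) (dz (dz (dz g)) p)
    (dz (dz (dz (dz g))) p) (Complex.I / 2) (hg0 p hp)
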